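/- If 0 < x_1 < ... < x_{n+1} < 1, all multipliers m_{i,j} of the Neville elimination of the Bernstein–Vandermonde matrix A, all multipliers m̃_{i,j} of the Neville elimination of A^T, and all diagonal pivots p_{i,i} are strictly positive. -/

import Mathlib

/-- All multipliers of the Neville elimination of the Bernstein–Vandermonde matrix A,
all multipliers of the Neville elimination of Aᵀ, and all diagonal pivots are positive. -/
theorem bernstein_vandermonde_neville_positive (n : ℕ) (x : ℕ → ℝ)
    (hx : ∀ k, 1 ≤ k → k ≤ n + 1 → 0 < x k ∧ x k < 1)
    (hmono : ∀ k l, 1 ≤ k → k < l → l ≤ n + 1 → x k < x l) :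
    (∀ i j : ℕ, 1 ≤ j → j ≤ n → j + 1 ≤ i → i ≤ n + 1 →
      0 < (1 - x i) ^ (n + 1 - j) * (1 - x (i - j)) *
            (∏ k ∈ Finset.Icc 1 (j - 1), (x i - x (i - k))) /
          ((1 - x (i - 1)) ^ (n + 2 - j) *
            ∏ k ∈ Finset.Icc 2 j, (x (i - 1) - x (i - k)))) ∧
    (∀ i j : ℕ, 1 ≤ j → j ≤ n → j + 1 ≤ i → i ≤ n + 1 →
      0 < ((n : ℝ) - i + 2) * x j / (((i : ℝ) - 1) * (1 - x j))) ∧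
    (∀ i : ℕ, 1 ≤ i → i ≤ n + 1 →
      0 < (n.choose (i - 1) : ℝ) * (1 - x i) ^ (n + 1 - i) *
            (∏ k ∈ Finset.Ico 1 i, (x i - x k)) /
          ∏ k ∈ Finset.Icc 1 (i - 1), (1 - x k)) := by
  have hx' : ∀ k, 1 ≤ k → k ≤ n + 1 → 0 < 1 - x k := fun k h1 h2 =>
    sub_pos.mpr (hx k h1 h2).2
  refine ⟨?_, ?_, ?_⟩
  · intro i j hj1 hjn hji hin
    apply div_pos
    · apply mul_pos (mul_pos (pow_pos (hx' i (by omega) hin) _)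
        (hx' (i - j) (by omega) (by omega)))
      apply Finset.prod_pos
      intro k hk
      simp only [Finset.mem_Icc] at hk
      exact sub_pos.mpr (hmono (i - k) i (by omega) (by omega) hin)
    · apply mul_pos (pow_pos (hx' (i - 1) (by omega) (by omega)) _)
      apply Finset.prod_pos
      intro k hk
      simp only [Finset.mem_Icc] at hk
      exact sub_pos.mpr (hmono (i - k) (i - 1) (by omega) (by omega) (by omega))
  · intro i j hj1 hjn hji hin
    apply div_pos
    · apply mul_pos _ (hx j hj1 (by omega)).1
      have : (i : ℝ) ≤ n + 1 := by exact_mod_cast hin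
      linarith
    · apply mul_pos _ (hx' j hj1 (by omega))
      have : (2 : ℝ) ≤ i := by exact_mod_cast (by omega : 2 ≤ i)
      linarith
  · intro i hi1 hin
    apply div_pos
    · apply mul_pos (mul_pos _ (pow_pos (hx' i hi1 hin) _))
      · apply Finset.prod_pos
        intro k hk
        simp only [Finset.mem_Ico] at hk
        exact sub_pos.mpr (hmono k i hk.1 hk.2 hin)
      · exact_mod_cast Nat.choose_pos (by omega : i - 1 ≤ n)
    · apply Finset.prod_pos
      intro k hk
      simp only [Finset.mem_Icc] at hk
      exact hx' k hk.1 (by omega)
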